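/- Let X be a real Banach space and let Y be an infinite-dimensional closed linear subspace of the dual X* which is reflexive (the canonical evaluation embedding of Y into its double dual Y** is surjective). Then the bounded linear operator Q : X → Y* defined by (Qx)(y) = y(x) for y ∈ Y, x ∈ X, is surjective; consequently X has a quotient isomorphic to Y*. -/

import Mathlib

noncomputable instance dualOfSubmoduleOfDualTopologicalSpace (X : Type*) [NormedAddCommGroup X]
    [NormedSpace ℝ X] (Y : Submodule ℝ (X →L[ℝ] ℝ)) : TopologicalSpace (Y →L[ℝ] ℝ) :=
  @ContinuousLinearMap.topologicalSpace ℝ ℝ _ _ (RingHom.id ℝ) Y ℝ _ _ _ _ _ _ _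

open Function Metric Set Filter Finset Topology

/-- If the "adjoint" of `T` (precomposition on duals) is norm-nondecreasing, then `T` is
surjective (E a Banach space). -/
theorem aux_surj_of_dual_bound {E F : Type*} [NormedAddCommGroup E] [NormedSpace ℝ E]
    [CompleteSpace E] [NormedAddCommGroup F] [NormedSpace ℝ F]
    (T : E →L[ℝ] F) (hT : ∀ ψ : F →L[ℝ] ℝ, ‖ψ‖ ≤ ‖ψ.comp T‖) :
    Function.Surjective T := by
  -- Step 1: the image of the closed unit ball is dense in the open unit ball.
  have dense : ∀ y : F, ‖y‖ < 1 → y ∈ closure (T '' Metric.closedBall 0 1) := by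
    intro y hy
    by_contra hyc
    have hconv : Convex ℝ (closure (T '' Metric.closedBall (0 : E) 1)) :=
      ((convex_closedBall (0 : E) 1).linear_image (T : E →ₗ[ℝ] F)).closure
    obtain ⟨f, u, hfu, huy⟩ := geometric_hahn_banach_closed_point hconv isClosed_closure hyc
    have h0 : (0 : F) ∈ closure (T '' Metric.closedBall (0 : E) 1) :=
      subset_closure ⟨0, by simp, by simp⟩
    have hu0 : 0 < u := by simpa using hfu 0 h0
    have hball : ∀ x : E, ‖x‖ ≤ 1 → |f (T x)| ≤ u := by
      intro x hx
      rw [abs_le]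
      constructor
      · have := hfu (T (-x)) (subset_closure ⟨-x, by simpa using hx, rfl⟩)
        simp only [map_neg] at this
        linarith
      · exact (hfu (T x) (subset_closure ⟨x, by simpa using hx, rfl⟩)).le
    have hcomp : ‖f.comp T‖ ≤ u := by
      refine ContinuousLinearMap.opNorm_le_bound _ hu0.le fun x => ?_
      rcases eq_or_ne x 0 with rfl | hx
      · simp [hu0.le]
      · have hx' : ‖(‖x‖⁻¹ • x)‖ ≤ 1 := by
          rw [norm_smul, norm_inv, norm_norm, inv_mul_cancel₀ (norm_ne_zero_iff.2 hx)]
        have := hball _ hx'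
        simp only [map_smul, smul_eq_mul, abs_mul, abs_inv, abs_norm] at this
        rw [Real.norm_eq_abs]
        have hxpos : 0 < ‖x‖ := norm_pos_iff.2 hx
        calc |f (T x)| = ‖x‖ * (‖x‖⁻¹ * |f (T x)|) := by
              rw [← mul_assoc, mul_inv_cancel₀ hxpos.ne', one_mul]
            _ ≤ ‖x‖ * u := by
              have hxn : (0:ℝ) ≤ ‖x‖ := norm_nonneg x
              nlinarith [this]
            _ = u * ‖x‖ := mul_comm _ _
    have hfnorm : ‖f‖ ≤ u := le_trans (hT f) hcomp
    have : f y ≤ ‖f‖ * ‖y‖ := le_trans (le_abs_self _) (f.le_opNorm y)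
    have : f y < u := by
      calc f y ≤ ‖f‖ * ‖y‖ := this
        _ ≤ u * ‖y‖ := by
          have := norm_nonneg y; nlinarith
        _ < u * 1 := by nlinarith
        _ = u := mul_one u
    linarith
  -- Step 2: approximate preimages with controlled norm.
  have hC : ∀ y : F, ∃ x : E, dist (T x) y ≤ 1 / 2 * ‖y‖ ∧ ‖x‖ ≤ 2 * ‖y‖ := by
    intro y
    rcases eq_or_ne y 0 with rfl | hy
    · exact ⟨0, by simp⟩
    · have hny : 0 < ‖y‖ := norm_pos_iff.2 hy
      set y' : F := (2 * ‖y‖)⁻¹ • y with hy'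
      have hny' : ‖y'‖ < 1 := by
        rw [hy', norm_smul, norm_inv, Real.norm_eq_abs, abs_of_pos (by positivity)]
        rw [inv_mul_eq_div, div_lt_one (by positivity)]
        linarith
      have := dense y' hny'
      rw [Metric.mem_closure_iff] at this
      obtain ⟨z, hz, hdz⟩ := this (1/4) (by norm_num)
      obtain ⟨x₀, hx₀, rfl⟩ := hz
      rw [Metric.mem_closedBall, dist_zero_right] at hx₀
      refine ⟨(2 * ‖y‖) • x₀, ?_, ?_⟩
      · have : T ((2 * ‖y‖) • x₀) - y = (2 * ‖y‖) • (T x₀ - y') := by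
          rw [smul_sub, map_smul, hy', smul_smul,
            mul_inv_cancel₀ (by positivity), one_smul]
        rw [dist_eq_norm, this, norm_smul, Real.norm_eq_abs, abs_of_pos (by positivity)]
        rw [dist_eq_norm, norm_sub_rev] at hdz
        nlinarith
      · rw [norm_smul, Real.norm_eq_abs, abs_of_pos (by positivity)]
        nlinarith
  -- Step 3: iterate to get exact preimages, using completeness of `E`.
  choose g hg using hC
  set h : F → F := fun y => y - T (g y) with hh
  have hle : ∀ y, ‖h y‖ ≤ 1 / 2 * ‖y‖ := by
    intro y
    rw [hh]
    simpa [dist_eq_norm, norm_sub_rev] using (hg y).1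
  intro y
  have hnle : ∀ n : ℕ, ‖h^[n] y‖ ≤ (1 / 2) ^ n * ‖y‖ := by
    intro n
    induction n with
    | zero => simp
    | succ n IH =>
      rw [Function.iterate_succ']
      refine le_trans (hle _) ?_
      rw [pow_succ', mul_assoc]
      gcongr
  set u : ℕ → E := fun n => g (h^[n] y) with hu
  have ule : ∀ n, ‖u n‖ ≤ (1 / 2) ^ n * (2 * ‖y‖) := fun n => by
    refine le_trans (hg _).2 ?_
    calc 2 * ‖h^[n] y‖ ≤ 2 * ((1 / 2) ^ n * ‖y‖) := by gcongr; exact hnle n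
      _ = (1 / 2) ^ n * (2 * ‖y‖) := by ring
  have sNu : Summable fun n => ‖u n‖ := by
    refine Summable.of_nonneg_of_le (fun n => norm_nonneg _) ule ?_
    exact Summable.mul_right _ (summable_geometric_of_lt_one (by norm_num) (by norm_num))
  have su : Summable u := sNu.of_norm
  set x := tsum u with hx
  have fsumeq : ∀ n : ℕ, T (∑ i ∈ Finset.range n, u i) = y - h^[n] y := by
    intro n
    induction n with
    | zero => simp
    | succ n IH =>
      rw [Finset.sum_range_succ, map_add, IH, Function.iterate_succ_apply', hh]
      simp only [hu]
      abel
  have htend : Tendsto (fun n => ∑ i ∈ Finset.range n, u i) atTop (𝓝 x) :=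
    su.hasSum.tendsto_sum_nat
  have L₁ : Tendsto (fun n => T (∑ i ∈ Finset.range n, u i)) atTop (𝓝 (T x)) :=
    (T.continuous.tendsto _).comp htend
  simp only [fsumeq] at L₁
  have L₂ : Tendsto (fun n => y - h^[n] y) atTop (𝓝 (y - 0)) := by
    refine tendsto_const_nhds.sub ?_
    rw [tendsto_iff_norm_sub_tendsto_zero]
    simp only [sub_zero]
    refine squeeze_zero (fun _ => norm_nonneg _) hnle ?_
    rw [← zero_mul ‖y‖]
    exact (tendsto_pow_atTop_nhds_zero_of_lt_one (by norm_num) (by norm_num)).mul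
      tendsto_const_nhds
  have feq : T x = y - 0 := tendsto_nhds_unique L₁ L₂
  rw [sub_zero] at feq
  exact ⟨x, feq⟩

set_option maxHeartbeats 1000000 in
theorem surjective_eval_of_reflexive_subspace_of_dual
    (X : Type*) [NormedAddCommGroup X] [NormedSpace ℝ X] [CompleteSpace X]
    (Y : Submodule ℝ (X →L[ℝ] ℝ)) (hYclosed : IsClosed (Y : Set (X →L[ℝ] ℝ)))
    (hYinf : ¬ FiniteDimensional ℝ Y)
    (hYrefl : Function.Surjective (NormedSpace.inclusionInDoubleDual ℝ Y)) :
    ∃ Q : X →L[ℝ] (Y →L[ℝ] ℝ),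
      (∀ (x : X) (y : Y), Q x y = (y : X →L[ℝ] ℝ) x) ∧ Function.Surjective Q := by
  set Q : X →L[ℝ] (Y →L[ℝ] ℝ) :=
    (((ContinuousLinearMap.compSL Y (X →L[ℝ] ℝ) ℝ (RingHom.id ℝ) (RingHom.id ℝ)).flip
      Y.subtypeL).comp (NormedSpace.inclusionInDoubleDual ℝ X)) with hQ
  have hQapp : ∀ (x : X) (y : Y), Q x y = (y : X →L[ℝ] ℝ) x := fun x y => rfl
  refine ⟨Q, hQapp, ?_⟩
  let Q' := (((ContinuousLinearMap.compSL Y (X →L[ℝ] ℝ) ℝ (RingHom.id ℝ) (RingHom.id ℝ)).flip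
    Y.subtypeL).comp (NormedSpace.inclusionInDoubleDual ℝ X))
  have hQapp' : ∀ (x : X) (y : Y), Q' x y = (y : X →L[ℝ] ℝ) x := fun x y => rfl
  change Function.Surjective Q'
  refine @aux_surj_of_dual_bound X _ _ _ _
    (ContinuousLinearMap.toNormedAddCommGroup (E := ↥Y) (F := ℝ) (σ₁₂ := RingHom.id ℝ))
    ContinuousLinearMap.toNormedSpace Q' ?_
  intro ψ
  obtain ⟨y, rfl⟩ := hYrefl ψ
  have h1 : (NormedSpace.inclusionInDoubleDual ℝ Y y).comp Q' = (y : X →L[ℝ] ℝ) := by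
    ext x
    simp only [ContinuousLinearMap.comp_apply]
    rw [NormedSpace.dual_def, hQapp']
  rw [h1]
  have h2 : ‖NormedSpace.inclusionInDoubleDual ℝ Y y‖ = ‖y‖ :=
    (NormedSpace.inclusionInDoubleDualLi ℝ (E := Y)).norm_map y
  rw [h2]
  exact le_of_eq rfl
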